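/- Let B_1, B_2, B_3 be nonempty compact convex subsets of ℝⁿ. Then Vol_n(B_1 + B_2 + B_3) + Vol_n(B_1) ≥ Vol_n(B_1 + B_2) + Vol_n(B_1 + B_3), where the sums of sets are Minkowski sums. -/

import Mathlib

open MeasureTheory
open scoped Pointwise RealInnerProductSpace

section Aux

variable {n : ℕ}

local notation "Eu" => EuclideanSpace ℝ (Fin n)

/-- Key lemma: if `K` is a nonempty compact convex set, `T` is compact with `0 ∈ T`, and
`F` is a finite nonempty set with polytope `P = convexHull ℝ F`, then
`Vol(K+T) + Vol(K+P) ≤ Vol(K+P+T) + Vol(K)`. -/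
lemma key_polytope_lemma (K T F : Set Eu)
    (hKne : K.Nonempty) (hKc : IsCompact K) (hKv : Convex ℝ K)
    (hTc : IsCompact T) (hT0 : (0 : Eu) ∈ T)
    (hF : F.Finite) (hFne : F.Nonempty) :
    volume (K + T) + volume (K + convexHull ℝ F) ≤
      volume (K + convexHull ℝ F + T) + volume K := by
  classical
  -- metric projection onto K
  have hproj : ∀ z : Eu, ∃ w, w ∈ K ∧ ∀ k ∈ K, ⟪z - w, k - w⟫ ≤ 0 := by
    intro z
    obtain ⟨w, hwK, hw⟩ :=
      exists_norm_eq_iInf_of_complete_convex hKne hKc.isClosed.isComplete hKv z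
    exact ⟨w, hwK, fun k hk =>
      ((norm_eq_iInf_iff_real_inner_le_zero hKv hwK).mp hw) k hk⟩
  choose p hpK hpvar using hproj
  -- p is 1-Lipschitz
  have hplip : LipschitzWith 1 p := by
    apply LipschitzWith.of_dist_le_mul
    intro x y
    rw [dist_eq_norm, dist_eq_norm, NNReal.coe_one, one_mul]
    have h1 : ⟪x - p x, p y - p x⟫ ≤ 0 := hpvar x (p y) (hpK y)
    have h2 : ⟪y - p y, p x - p y⟫ ≤ 0 := hpvar y (p x) (hpK x)
    have h1' : 0 ≤ ⟪x - p x, p x - p y⟫ := by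
      have h1n := h1
      rw [show p y - p x = -(p x - p y) from (neg_sub _ _).symm, inner_neg_right] at h1n
      linarith
    have h4 : 0 ≤ ⟪(x - p x) - (y - p y), p x - p y⟫ := by
      rw [inner_sub_left]; linarith
    have h5 : (x - p x) - (y - p y) = (x - y) - (p x - p y) := by abel
    rw [h5, inner_sub_left] at h4
    have h6 : ⟪p x - p y, p x - p y⟫ ≤ ⟪x - y, p x - p y⟫ := by linarith
    have h7 : ⟪x - y, p x - p y⟫ ≤ ‖x - y‖ * ‖p x - p y‖ := real_inner_le_norm _ _
    have h8 : ‖p x - p y‖ * ‖p x - p y‖ = ⟪p x - p y, p x - p y⟫ :=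
      (real_inner_self_eq_norm_mul_norm _).symm
    rcases eq_or_lt_of_le (norm_nonneg (p x - p y)) with h9 | h9
    · rw [← h9]; exact norm_nonneg _
    · nlinarith
  set u : Eu → Eu := fun z => z - p z with hu
  -- enumeration of F
  set m : ℕ := hF.toFinset.card with hm
  set vs : Fin m → Eu := fun i => ((hF.toFinset.equivFin.symm i : hF.toFinset) : Eu) with hvs
  have hvs_memF : ∀ i, vs i ∈ F := fun i =>
    hF.mem_toFinset.mp (hF.toFinset.equivFin.symm i).2
  have hvs_surj : ∀ y ∈ F, ∃ i, vs i = y := by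
    intro y hy
    refine ⟨hF.toFinset.equivFin ⟨y, hF.mem_toFinset.mpr hy⟩, ?_⟩
    simp [hvs]
  have hm0 : 0 < m := by
    rw [hm, Finset.card_pos, Set.Finite.toFinset_nonempty]
    exact hFne
  haveI : Nonempty (Fin m) := ⟨⟨0, hm0⟩⟩
  -- the "first maximizer" selection predicate
  set Sel : Eu → Fin m → Prop := fun w j =>
    (∀ i, ⟪w, vs i⟫ ≤ ⟪w, vs j⟫) ∧
      ∀ i, i < j → ¬ (∀ i', ⟪w, vs i'⟫ ≤ ⟪w, vs i⟫) with hSel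
  have hSel_ex : ∀ w : Eu, ∃ j, Sel w j := by
    intro w
    set s : Finset (Fin m) :=
      Finset.univ.filter (fun j : Fin m => ∀ i, ⟪w, vs i⟫ ≤ ⟪w, vs j⟫) with hs
    have hsne : s.Nonempty := by
      obtain ⟨j, -, hj⟩ := Finset.exists_max_image Finset.univ
        (fun j : Fin m => ⟪w, vs j⟫) ⟨Classical.arbitrary _, Finset.mem_univ _⟩
      refine ⟨j, ?_⟩
      simp only [hs, Finset.mem_filter, Finset.mem_univ, true_and]
      exact fun i => hj i (Finset.mem_univ i)
    refine ⟨s.min' hsne, ?_, ?_⟩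
    · have := s.min'_mem hsne
      simp only [hs, Finset.mem_filter, Finset.mem_univ, true_and] at this
      exact this
    · intro i hi hforall
      have : s.min' hsne ≤ i := s.min'_le i
        (by simp only [hs, Finset.mem_filter, Finset.mem_univ, true_and]; exact hforall)
      exact absurd hi (not_lt.mpr this)
  have hSel_uniq : ∀ (w : Eu) (j j' : Fin m), Sel w j → Sel w j' → j = j' := by
    intro w j j' hj hj'
    by_contra hne
    rcases lt_or_gt_of_ne hne with h | h
    · exact hj'.2 j h hj.1
    · exact hj.2 j' h hj'.1
  -- sets
  set P : Set Eu := convexHull ℝ F with hP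
  set X : Set Eu := K + P with hX
  set S : Set Eu := X + T with hS
  set D : Set Eu := (K + T) \ K with hD
  set A : Fin m → Set Eu := fun j => {z | z ∈ D ∧ Sel (u z) j} with hA
  have hPc : IsCompact P := hF.isCompact_convexHull ℝ
  have hXm : MeasurableSet X := (hKc.add hPc).isClosed.measurableSet
  have hSm : MeasurableSet S := ((hKc.add hPc).add hTc).isClosed.measurableSet
  have hDm : MeasurableSet D :=
    ((hKc.add hTc).isClosed.measurableSet).diff hKc.isClosed.measurableSet
  have hgcont : ∀ i : Fin m, Continuous (fun z : Eu => ⟪u z, vs i⟫) := fun i =>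
    (continuous_id.sub hplip.continuous).inner continuous_const
  have hA_meas : ∀ j, MeasurableSet (A j) := by
    intro j
    have h1 : MeasurableSet {z : Eu | ∀ i, ⟪u z, vs i⟫ ≤ ⟪u z, vs j⟫} := by
      rw [Set.setOf_forall]
      exact MeasurableSet.iInter fun i =>
        measurableSet_le (hgcont i).measurable (hgcont j).measurable
    have h2 : MeasurableSet
        {z : Eu | ∀ i, i < j → ¬ (∀ i', ⟪u z, vs i'⟫ ≤ ⟪u z, vs i⟫)} := by
      rw [Set.setOf_forall]
      refine MeasurableSet.iInter fun i => ?_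
      by_cases hij : i < j
      · simp only [hij, true_implies]
        have h3 : MeasurableSet {z : Eu | ∀ i', ⟪u z, vs i'⟫ ≤ ⟪u z, vs i⟫} := by
          rw [Set.setOf_forall]
          exact MeasurableSet.iInter fun i' =>
            measurableSet_le (hgcont i').measurable (hgcont i).measurable
        have h4 : {z : Eu | ¬ ∀ i', ⟪u z, vs i'⟫ ≤ ⟪u z, vs i⟫} =
            {z : Eu | ∀ i', ⟪u z, vs i'⟫ ≤ ⟪u z, vs i⟫}ᶜ := rfl
        rw [h4]
        exact h3.compl
      · simp only [hij, false_implies, Set.setOf_true]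
        exact MeasurableSet.univ
    have : A j = D ∩ ({z : Eu | ∀ i, ⟪u z, vs i⟫ ≤ ⟪u z, vs j⟫} ∩
        {z : Eu | ∀ i, i < j → ¬ (∀ i', ⟪u z, vs i'⟫ ≤ ⟪u z, vs i⟫)}) := by
      ext z
      simp only [hA, Set.mem_setOf_eq, Set.mem_inter_iff, hSel]
      all_goals tauto
    rw [this]
    exact hDm.inter (h1.inter h2)
  -- basic geometric facts about points of A j
  have hAj_facts : ∀ (j : Fin m) (z : Eu), z ∈ A j → z + vs j ∈ S \ X := by
    intro j z hz
    obtain ⟨⟨hzKT, hzK⟩, hSelz⟩ := hz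
    have ha_ne : u z ≠ 0 := by
      intro h0
      apply hzK
      have : z = p z := by
        have := sub_eq_zero.mp h0
        exact this
      rw [this]; exact hpK z
    constructor
    · -- z + vs j ∈ S
      obtain ⟨k, hk, t, ht, hkt⟩ := hzKT
      refine ⟨k + vs j, ⟨k, hk, vs j, subset_convexHull ℝ F (hvs_memF j), rfl⟩, t, ht, ?_⟩
      beta_reduce at hkt
      rw [← hkt]
      abel
    · -- z + vs j ∉ X
      rintro ⟨k, hk, q, hq, hkq⟩
      set a : Eu := u z with ha
      have hmaxF : ∀ y ∈ F, ⟪a, y⟫ ≤ ⟪a, vs j⟫ := by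
        intro y hy
        obtain ⟨i, rfl⟩ := hvs_surj y hy
        exact hSelz.1 i
      have hmaxP : ⟪a, q⟫ ≤ ⟪a, vs j⟫ := by
        have hhalf : Convex ℝ {x : Eu | ⟪a, x⟫ ≤ ⟪a, vs j⟫} :=
          convex_halfSpace_le
            ⟨fun x y => inner_add_right _ _ _, fun c x => real_inner_smul_right _ _ _⟩ _
        exact convexHull_min hmaxF hhalf hq
      have hkub : ⟪a, k⟫ ≤ ⟪a, p z⟫ := by
        have := hpvar z k hk
        rw [inner_sub_right] at this
        linarith
      have hzdec : ⟪a, z⟫ = ⟪a, p z⟫ + ⟪a, a⟫ := by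
        have haz : a = z - p z := by rw [ha, hu]
        have h1 : ⟪a, z - p z⟫ = ⟪a, z⟫ - ⟪a, p z⟫ := inner_sub_right _ _ _
        rw [← haz] at h1
        linarith
      have hinner := congrArg (fun w => ⟪a, w⟫) hkq
      simp only [inner_add_right] at hinner
      have haa : ⟪a, a⟫ ≤ 0 := by
        rw [hzdec] at hinner
        linarith
      exact ha_ne (real_inner_self_nonpos.mp haa)
  -- cover of D
  have hDcover : D ⊆ ⋃ j, A j := by
    intro z hz
    obtain ⟨j, hj⟩ := hSel_ex (u z)
    exact Set.mem_iUnion.mpr ⟨j, hz, hj⟩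
  -- translated images, as preimages
  set img : Fin m → Set Eu := fun j => (fun x => -vs j + x) ⁻¹' (A j) with himg
  have himg_mem : ∀ (j : Fin m) (x : Eu), x ∈ img j ↔ -vs j + x ∈ A j := by
    intro j x; rfl
  have himg_meas : ∀ j, MeasurableSet (img j) := fun j =>
    (hA_meas j).preimage (measurable_const_add _)
  have himg_vol : ∀ j, volume (img j) = volume (A j) := fun j =>
    measure_preimage_add volume _ _
  have himg_sub : ∀ j, img j ⊆ S \ X := by
    intro j x hx
    have hz := (himg_mem j x).mp hx
    have := hAj_facts j (-vs j + x) hz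
    have hxid : -vs j + x + vs j = x := by abel
    rwa [hxid] at this
  -- pairwise disjointness of images
  have himg_disj : Pairwise (Function.onFun Disjoint img) := by
    intro j j' hjj'
    rw [Function.onFun, Set.disjoint_left]
    intro x hx hx'
    apply hjj'
    set z : Eu := -vs j + x with hz
    set z' : Eu := -vs j' + x with hz'
    obtain ⟨-, hSelz⟩ := (himg_mem j x).mp hx
    obtain ⟨-, hSelz'⟩ := (himg_mem j' x).mp hx'
    set a : Eu := u z with ha
    set b : Eu := u z' with hb
    have h1 : ⟪a, vs j'⟫ ≤ ⟪a, vs j⟫ := hSelz.1 j'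
    have h2 : ⟪b, vs j⟫ ≤ ⟪b, vs j'⟫ := hSelz'.1 j
    have h3 : ⟪a, p z' - p z⟫ ≤ 0 := hpvar z (p z') (hpK z')
    have h4 : ⟪b, p z - p z'⟫ ≤ 0 := hpvar z' (p z) (hpK z)
    have hab : a - b = (vs j' - vs j) + (p z' - p z) := by
      simp only [ha, hb, hu, hz, hz']
      abel
    have key : ⟪a - b, a - b⟫ ≤ 0 := by
      have e1 : ⟪a, a - b⟫ = (⟪a, vs j'⟫ - ⟪a, vs j⟫) + ⟪a, p z' - p z⟫ := by
        rw [hab, inner_add_right, inner_sub_right]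
      have e2 : ⟪b, a - b⟫ = (⟪b, vs j'⟫ - ⟪b, vs j⟫) + ⟪b, p z' - p z⟫ := by
        rw [hab, inner_add_right, inner_sub_right]
      have e4 : ⟪b, p z' - p z⟫ = -⟪b, p z - p z'⟫ := by
        rw [← inner_neg_right, neg_sub]
      rw [inner_sub_left, e1, e2, e4]
      linarith
    have hab0 : a = b := sub_eq_zero.mp (real_inner_self_nonpos.mp key)
    exact hSel_uniq a j j' hSelz (hab0 ▸ hSelz')
  -- measure chain
  have step1 : volume (K + T) ≤ volume K + volume D := by
    have hsub : K + T ⊆ K ∪ D := by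
      intro x hx
      by_cases h : x ∈ K
      · exact Or.inl h
      · exact Or.inr ⟨hx, h⟩
    exact (measure_mono hsub).trans (measure_union_le _ _)
  have step2 : volume D ≤ ∑' j, volume (A j) :=
    (measure_mono hDcover).trans (measure_iUnion_le _)
  have step3 : ∑' j, volume (A j) = volume (⋃ j, img j) := by
    rw [measure_iUnion himg_disj himg_meas]
    exact tsum_congr fun j => (himg_vol j).symm
  have step4 : volume (⋃ j, img j) ≤ volume (S \ X) :=
    measure_mono (Set.iUnion_subset himg_sub)
  have hXsubS : X ⊆ S := by
    intro x hx
    exact ⟨x, hx, 0, hT0, add_zero x⟩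
  have step5 : volume (S \ X) + volume X = volume S := by
    rw [← measure_union disjoint_sdiff_self_left hXm, Set.diff_union_of_subset hXsubS]
  have hgoal : volume (K + T) + volume X ≤ volume S + volume K := by
    calc volume (K + T) + volume X ≤ (volume K + volume D) + volume X :=
          add_le_add_left step1 _
      _ ≤ (volume K + volume (S \ X)) + volume X := by
          refine add_le_add_left (add_le_add_right ?_ _) _
          exact step2.trans (step3.trans_le step4)
      _ = volume K + (volume (S \ X) + volume X) := by rw [add_assoc]
      _ = volume K + volume S := by rw [step5]
      _ = volume S + volume K := add_comm _ _
  exact hgoal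

end Aux

/-- **Supermodularity of volume for three convex bodies** (Theorem 4.5 of
Fradelizi–Madiman–Marsiglietti–Zvavitch): for nonempty compact convex sets
`B₁, B₂, B₃ ⊆ ℝⁿ`,
`Vol(B₁+B₂+B₃) + Vol(B₁) ≥ Vol(B₁+B₂) + Vol(B₁+B₃)` (Minkowski sums). -/
theorem volume_supermodular_three_convex {n : ℕ}
    (B₁ B₂ B₃ : Set (EuclideanSpace ℝ (Fin n)))
    (h₁ : B₁.Nonempty) (h₂ : B₂.Nonempty) (h₃ : B₃.Nonempty)
    (hc₁ : IsCompact B₁) (hc₂ : IsCompact B₂) (hc₃ : IsCompact B₃)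
    (hv₁ : Convex ℝ B₁) (hv₂ : Convex ℝ B₂) (hv₃ : Convex ℝ B₃) :
    volume (B₁ + B₂) + volume (B₁ + B₃) ≤ volume (B₁ + B₂ + B₃) + volume B₁ := by
  classical
  obtain ⟨t₀, ht₀⟩ := h₃
  -- translate B₃ so that it contains 0
  set T : Set (EuclideanSpace ℝ (Fin n)) := (fun x => x + -t₀) '' B₃ with hT
  have hT0 : (0 : EuclideanSpace ℝ (Fin n)) ∈ T := by
    refine ⟨t₀, ht₀, ?_⟩
    show t₀ + -t₀ = 0
    abel
  have hTcomp : IsCompact T := hc₃.image (continuous_id.add continuous_const)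
  -- translation invariance of volume
  have himg_vol : ∀ M : Set (EuclideanSpace ℝ (Fin n)),
      volume ((fun x => x + -t₀) '' M) = volume M := by
    intro M
    have himg : (fun x => x + -t₀) '' M = (fun x => t₀ + x) ⁻¹' M := by
      ext x
      constructor
      · rintro ⟨mm, hm, rfl⟩
        show t₀ + (mm + -t₀) ∈ M
        have he : t₀ + (mm + -t₀) = mm := by abel
        rw [he]; exact hm
      · intro hx
        refine ⟨t₀ + x, hx, ?_⟩
        show t₀ + x + -t₀ = x
        abel
    rw [himg, measure_preimage_add]
  have hsum_img : ∀ A B : Set (EuclideanSpace ℝ (Fin n)),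
      A + (fun x => x + -t₀) '' B = (fun x => x + -t₀) '' (A + B) := by
    intro A B
    ext x
    simp only [Set.mem_add, Set.mem_image]
    constructor
    · rintro ⟨a, ha, y, ⟨b, hb, rfl⟩, rfl⟩
      refine ⟨a + b, ⟨a, ha, b, hb, rfl⟩, ?_⟩
      show a + b + -t₀ = a + (b + -t₀)
      abel
    · rintro ⟨y, ⟨a, ha, b, hb, rfl⟩, rfl⟩
      refine ⟨a, ha, b + -t₀, ⟨b, hb, rfl⟩, ?_⟩
      show a + (b + -t₀) = a + b + -t₀
      abel
  have hvolT1 : volume (B₁ + T) = volume (B₁ + B₃) := by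
    rw [hT, hsum_img, himg_vol]
  have hvolT2 : volume (B₁ + B₂ + T) = volume (B₁ + B₂ + B₃) := by
    rw [hT, hsum_img, himg_vol]
  -- dense sequence in B₂
  haveI : Nonempty ↥B₂ := h₂.to_subtype
  obtain ⟨useq, hdense⟩ := TopologicalSpace.exists_dense_seq ↥B₂
  set c : ℕ → EuclideanSpace ℝ (Fin n) := fun i => (useq i : EuclideanSpace ℝ (Fin n))
    with hc
  have hc_mem : ∀ i, c i ∈ B₂ := fun i => (useq i).2
  set P : ℕ → Set (EuclideanSpace ℝ (Fin n)) :=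
    fun k => convexHull ℝ (c '' Set.Iic k) with hPdef
  have hPmono : Monotone P := fun k k' h =>
    convexHull_mono (Set.image_mono (Set.Iic_subset_Iic.mpr h))
  have hPsub : ∀ k, P k ⊆ B₂ := by
    intro k
    apply convexHull_min _ hv₂
    rintro y ⟨i, -, rfl⟩
    exact hc_mem i
  -- apply the key lemma for each k
  have hkey : ∀ k, volume (B₁ + T) + volume (B₁ + P k) ≤
      volume (B₁ + P k + T) + volume B₁ := fun k =>
    key_polytope_lemma B₁ T (c '' Set.Iic k) h₁ hc₁ hv₁ hTcomp hT0
      ((Set.finite_Iic k).image c) (Set.Nonempty.image c Set.nonempty_Iic)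
  have hkey' : ∀ k, volume (B₁ + P k) + volume (B₁ + T) ≤
      volume (B₁ + B₂ + T) + volume B₁ := by
    intro k
    have hmid : volume (B₁ + P k + T) ≤ volume (B₁ + B₂ + T) := by
      apply measure_mono
      exact Set.add_subset_add_right (Set.add_subset_add_left (hPsub k))
    calc volume (B₁ + P k) + volume (B₁ + T)
        = volume (B₁ + T) + volume (B₁ + P k) := add_comm _ _
      _ ≤ volume (B₁ + P k + T) + volume B₁ := hkey k
      _ ≤ volume (B₁ + B₂ + T) + volume B₁ := add_le_add_left hmid _
  -- the union of the approximating bodies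
  set U : Set (EuclideanSpace ℝ (Fin n)) := ⋃ k, (B₁ + P k) with hU
  have hUmono : Monotone (fun k => B₁ + P k) := fun k k' h =>
    Set.add_subset_add_left (hPmono h)
  have hWconv : Convex ℝ (⋃ k, P k) :=
    (hPmono.directed_le).convex_iUnion (fun k => convex_convexHull ℝ _)
  have hUconv : Convex ℝ U := by
    have : U = B₁ + ⋃ k, P k := by
      rw [hU, Set.add_iUnion]
    rw [this]
    exact hv₁.add hWconv
  have hsubcl : B₁ + B₂ ⊆ closure U := by
    rintro x ⟨a, ha, b, hb, rfl⟩
    have hbcl : b ∈ closure (Set.range c) := by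
      rw [Metric.mem_closure_iff]
      intro ε hε
      obtain ⟨i, hi⟩ := hdense.exists_dist_lt (⟨b, hb⟩ : ↥B₂) hε
      refine ⟨c i, ⟨i, rfl⟩, ?_⟩
      rw [Subtype.dist_eq] at hi
      exact hi
    have h1 : a + b ∈ (fun y => a + y) '' closure (Set.range c) := ⟨b, hbcl, rfl⟩
    have h2 : a + b ∈ closure ((fun y => a + y) '' Set.range c) :=
      image_closure_subset_closure_image (continuous_const.add continuous_id) h1
    refine closure_mono ?_ h2
    rintro y ⟨w, ⟨i, rfl⟩, rfl⟩
    refine Set.mem_iUnion.mpr ⟨i, Set.add_mem_add ha ?_⟩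
    exact subset_convexHull ℝ _ ⟨i, Set.mem_Iic.mpr le_rfl, rfl⟩
  have hvolU : volume (B₁ + B₂) ≤ volume U := by
    have hclsub : closure U ⊆ U ∪ frontier U := by
      intro x hx
      by_cases h : x ∈ U
      · exact Or.inl h
      · exact Or.inr ⟨hx, fun hint => h (interior_subset hint)⟩
    calc volume (B₁ + B₂) ≤ volume (closure U) := measure_mono hsubcl
      _ ≤ volume (U ∪ frontier U) := measure_mono hclsub
      _ ≤ volume U + volume (frontier U) := measure_union_le _ _
      _ = volume U := by rw [hUconv.addHaar_frontier volume, add_zero]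
  have hvolU' : volume U = ⨆ k, volume (B₁ + P k) :=
    Directed.measure_iUnion hUmono.directed_le
  -- final assembly
  calc volume (B₁ + B₂) + volume (B₁ + B₃)
      = volume (B₁ + B₂) + volume (B₁ + T) := by rw [hvolT1]
    _ ≤ (⨆ k, volume (B₁ + P k)) + volume (B₁ + T) := by
        exact add_le_add_left (hvolU.trans_eq hvolU') _
    _ = ⨆ k, (volume (B₁ + P k) + volume (B₁ + T)) := by rw [ENNReal.iSup_add]
    _ ≤ volume (B₁ + B₂ + T) + volume B₁ := iSup_le fun k => hkey' k
    _ = volume (B₁ + B₂ + B₃) + volume B₁ := by rw [hvolT2]
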